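/- Under the hypotheses of the antisymmetric projector lemma, if A_s for s ∈ S_k denotes the operator acting with projector P_i on register s_i (i=1..k) and identity elsewhere, where S_k is the set of injective sequences of length k from [η], then ∑_{s∈S_k} ⟨ψ|A_s|ψ⟩ ≤ 1. -/

import Mathlib

open scoped Classical

/-- Expectation value ⟨ψ| A |ψ⟩ of an operator `A` in the state `ψ`. -/
noncomputable def expval {I : Type*} [Fintype I] (A : Matrix I I ℂ) (ψ : I → ℂ) : ℂ :=
  dotProduct (star ψ) (A.mulVec ψ)

/-- The operator `A_s` acting with the rank-one projector onto `φ i` on register `s i`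
(for `i = 1,…,k`) and with the identity on all other registers. -/
noncomputable def projSeq (n η k : ℕ) (s : Fin k → Fin η) (φ : Fin k → Fin (2 ^ n) → ℂ) :
    Matrix (Fin η → Fin (2 ^ n)) (Fin η → Fin (2 ^ n)) ℂ :=
  Matrix.of fun x y =>
    (if ∀ j : Fin η, (∀ i : Fin k, s i ≠ j) → x j = y j then (1 : ℂ) else 0) *
      ∏ i : Fin k, φ i (x (s i)) * star (φ i (y (s i)))

private lemma star_mul_self_c (z : ℂ) : star z * z = ((‖z‖ ^ 2 : ℝ) : ℂ) := by
  rw [Complex.star_def, mul_comm, Complex.mul_conj, Complex.normSq_eq_norm_sq]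

private lemma prod_ind {ι : Type*} [Fintype ι] (p : ι → Prop) [DecidablePred p]
    [Decidable (∀ i, p i)] :
    (∏ i, if p i then (1 : ℂ) else 0) = if ∀ i, p i then (1 : ℂ) else 0 := by
  by_cases h : ∀ i, p i
  · rw [if_pos h]
    exact Finset.prod_eq_one fun i _ => if_pos (h i)
  · rw [if_neg h]
    push_neg at h
    obtain ⟨i, hi⟩ := h
    exact Finset.prod_eq_zero (Finset.mem_univ i) (if_neg hi)

/-- Generic expansion: sum over coefficient indices of weighted |c a|² as a double sum. -/
private lemma aux_sum {η N : ℕ} (G : Fin N → Fin N → ℂ) (ψ : (Fin η → Fin N) → ℂ)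
    (w : Fin η → Fin N → ℂ) :
    (∑ a : Fin η → Fin N, (∏ j, w j (a j)) *
        (star (∑ x, (∏ j, star (G (a j) (x j))) * ψ x) *
          (∑ x, (∏ j, star (G (a j) (x j))) * ψ x)))
      = ∑ x, ∑ y, (∏ j, ∑ t, w j t * (G t (x j) * star (G t (y j)))) *
          (star (ψ x) * ψ y) := by
  have h1 : ∀ a : Fin η → Fin N, (∏ j, w j (a j)) *
        (star (∑ x, (∏ j, star (G (a j) (x j))) * ψ x) *
          (∑ y, (∏ j, star (G (a j) (y j))) * ψ y))
      = ∑ x, ∑ y, (∏ j, w j (a j) * (G (a j) (x j) * star (G (a j) (y j)))) *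
          (star (ψ x) * ψ y) := by
    intro a
    rw [star_sum, Finset.sum_mul_sum, Finset.mul_sum]
    refine Finset.sum_congr rfl fun x _ => ?_
    rw [Finset.mul_sum]
    refine Finset.sum_congr rfl fun y _ => ?_
    rw [star_mul, star_prod]
    simp only [star_star]
    rw [Finset.prod_mul_distrib, Finset.prod_mul_distrib]
    ring
  simp only [h1]
  rw [Finset.sum_comm]
  refine Finset.sum_congr rfl fun x _ => ?_
  rw [Finset.sum_comm]
  refine Finset.sum_congr rfl fun y _ => ?_
  rw [← Finset.sum_mul]
  congr 1
  exact (Fintype.prod_sum fun j t => w j t * (G t (x j) * star (G t (y j)))).symm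

/-- Parseval-type identity. -/
private lemma key_parseval {η N : ℕ} (G : Fin N → Fin N → ℂ) (ψ : (Fin η → Fin N) → ℂ)
    (hcol : ∀ u u' : Fin N, ∑ t, G t u * star (G t u') = if u = u' then 1 else 0) :
    (∑ a : Fin η → Fin N,
        star (∑ x, (∏ j, star (G (a j) (x j))) * ψ x) *
          (∑ x, (∏ j, star (G (a j) (x j))) * ψ x))
      = ∑ x, star (ψ x) * ψ x := by
  have h := aux_sum G ψ (fun _ _ => (1 : ℂ))
  simp only [one_mul, Finset.prod_const_one] at h
  rw [h]
  have h2 : ∀ x y : Fin η → Fin N,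
      (∏ j, ∑ t, G t (x j) * star (G t (y j))) = if x = y then (1:ℂ) else 0 := by
    intro x y
    rw [Finset.prod_congr rfl fun j _ => hcol (x j) (y j), prod_ind]
    exact if_congr funext_iff.symm rfl rfl
  calc (∑ x, ∑ y, (∏ j, ∑ t, G t (x j) * star (G t (y j))) * (star (ψ x) * ψ y))
      = ∑ x, ∑ y, if x = y then star (ψ x) * ψ y else 0 := by
        refine Finset.sum_congr rfl fun x _ => Finset.sum_congr rfl fun y _ => ?_
        rw [h2, boole_mul]
    _ = ∑ x, star (ψ x) * ψ x := by
        refine Finset.sum_congr rfl fun x _ => ?_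
        rw [Finset.sum_ite_eq]
        simp

/-- Antisymmetry transfers to the coefficients. -/
private lemma c_swap {η N : ℕ} (G : Fin N → Fin N → ℂ) (ψ : (Fin η → Fin N) → ℂ)
    (hanti : ∀ i j : Fin η, i ≠ j → ∀ x : Fin η → Fin N, ψ (x ∘ Equiv.swap i j) = -ψ x)
    (p q : Fin η) (hpq : p ≠ q) (a : Fin η → Fin N) :
    (∑ x, (∏ j, star (G ((a ∘ Equiv.swap p q) j) (x j))) * ψ x)
      = - ∑ x, (∏ j, star (G (a j) (x j))) * ψ x := by
  let e : ((Fin η → Fin N) ≃ (Fin η → Fin N)) :=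
    (Equiv.swap p q).arrowCongr (Equiv.refl (Fin N))
  calc (∑ x, (∏ j, star (G ((a ∘ Equiv.swap p q) j) (x j))) * ψ x)
      = ∑ x, (∏ j, star (G (a (Equiv.swap p q j)) (x (Equiv.swap p q j)))) *
          ψ (x ∘ Equiv.swap p q) :=
        (Equiv.sum_comp e fun x => (∏ j, star (G ((a ∘ Equiv.swap p q) j) (x j))) * ψ x).symm
    _ = ∑ x, -((∏ j, star (G (a j) (x j))) * ψ x) := by
        refine Finset.sum_congr rfl fun x _ => ?_
        have hpr : (∏ j, star (G (a (Equiv.swap p q j)) (x (Equiv.swap p q j))))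
            = ∏ j, star (G (a j) (x j)) :=
          Equiv.prod_comp (Equiv.swap p q) fun m => star (G (a m) (x m))
        rw [hpr, hanti p q hpq x]
        ring
    _ = - ∑ x, (∏ j, star (G (a j) (x j))) * ψ x := by
        rw [Finset.sum_neg_distrib]

private lemma c_zero {η N : ℕ} (G : Fin N → Fin N → ℂ) (ψ : (Fin η → Fin N) → ℂ)
    (hanti : ∀ i j : Fin η, i ≠ j → ∀ x : Fin η → Fin N, ψ (x ∘ Equiv.swap i j) = -ψ x)
    (a : Fin η → Fin N) (ha : ¬ Function.Injective a) :
    (∑ x, (∏ j, star (G (a j) (x j))) * ψ x) = 0 := by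
  obtain ⟨p, q, hpq, hne⟩ := Function.not_injective_iff.mp ha
  have hswap := c_swap G ψ hanti p q hne a
  have haa : a ∘ Equiv.swap p q = a := by
    funext m
    rcases eq_or_ne m p with rfl | h1
    · simp [Equiv.swap_apply_left, hpq.symm]
    rcases eq_or_ne m q with rfl | h2
    · simp [Equiv.swap_apply_right, hpq]
    · simp [Equiv.swap_apply_of_ne_of_ne h1 h2]
  rw [haa] at hswap
  linear_combination hswap / 2

/-- The main expansion of the expectation value in the extended-basis coefficients. -/
private lemma key_expand {η N k : ℕ} (G : Fin N → Fin N → ℂ) (φ : Fin k → Fin N → ℂ)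
    (ι : Fin k → Fin N)
    (hcol : ∀ u u' : Fin N, ∑ t, G t u * star (G t u') = if u = u' then 1 else 0)
    (hGφ : ∀ (i : Fin k) (u : Fin N), G (ι i) u = φ i u)
    (ψ : (Fin η → Fin N) → ℂ) (s : Fin k → Fin η) (hs : Function.Injective s) :
    (∑ a : Fin η → Fin N, (if ∀ i, a (s i) = ι i then (1:ℂ) else 0) *
        (star (∑ x, (∏ j, star (G (a j) (x j))) * ψ x) *
          (∑ x, (∏ j, star (G (a j) (x j))) * ψ x)))
      = ∑ x, ∑ y, ((if ∀ j : Fin η, (∀ i : Fin k, s i ≠ j) → x j = y j then (1:ℂ) else 0) *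
          ∏ i, φ i (x (s i)) * star (φ i (y (s i)))) * (star (ψ x) * ψ y) := by
  have hstep : ∀ a : Fin η → Fin N, (if ∀ i, a (s i) = ι i then (1:ℂ) else 0)
      = ∏ j, if ∀ i : Fin k, s i = j → a j = ι i then (1:ℂ) else 0 := by
    intro a
    rw [prod_ind]
    refine if_congr ?_ rfl rfl
    constructor
    · intro h j i hij
      rw [← hij]; exact h i
    · intro h i
      exact h (s i) i rfl
  calc (∑ a : Fin η → Fin N, (if ∀ i, a (s i) = ι i then (1:ℂ) else 0) *
        (star (∑ x, (∏ j, star (G (a j) (x j))) * ψ x) *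
          (∑ x, (∏ j, star (G (a j) (x j))) * ψ x)))
      = ∑ a : Fin η → Fin N,
          (∏ j, if ∀ i : Fin k, s i = j → a j = ι i then (1:ℂ) else 0) *
        (star (∑ x, (∏ j, star (G (a j) (x j))) * ψ x) *
          (∑ x, (∏ j, star (G (a j) (x j))) * ψ x)) := by
        refine Finset.sum_congr rfl fun a _ => ?_
        rw [hstep]
    _ = ∑ x, ∑ y, (∏ j, ∑ t,
          (if ∀ i : Fin k, s i = j → t = ι i then (1:ℂ) else 0) *
          (G t (x j) * star (G t (y j)))) * (star (ψ x) * ψ y) :=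
        aux_sum G ψ (fun j t => if ∀ i : Fin k, s i = j → t = ι i then (1:ℂ) else 0)
    _ = _ := by
        refine Finset.sum_congr rfl fun x _ => Finset.sum_congr rfl fun y _ => ?_
        congr 1
        set T : Finset (Fin η) := Finset.image s Finset.univ with hT
        have hsplit := Finset.prod_mul_prod_compl T
          (fun j => ∑ t, (if ∀ i : Fin k, s i = j → t = ι i then (1:ℂ) else 0) *
            (G t (x j) * star (G t (y j))))
        rw [← hsplit]
        have hTprod : (∏ j ∈ T, ∑ t, (if ∀ i : Fin k, s i = j → t = ι i then (1:ℂ) else 0) *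
            (G t (x j) * star (G t (y j))))
            = ∏ i, φ i (x (s i)) * star (φ i (y (s i))) := by
          rw [hT, Finset.prod_image (fun i _ i' _ h => hs h)]
          refine Finset.prod_congr rfl fun i _ => ?_
          have hcond : ∀ t : Fin N, (∀ i' : Fin k, s i' = s i → t = ι i') ↔ t = ι i := by
            intro t
            constructor
            · intro h; exact h i rfl
            · intro h i' hi'
              rw [hs hi']; exact h
          calc (∑ t, (if ∀ i' : Fin k, s i' = s i → t = ι i' then (1:ℂ) else 0) *
                (G t (x (s i)) * star (G t (y (s i)))))
              = ∑ t, (if t = ι i then (G t (x (s i)) * star (G t (y (s i)))) else 0) := by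
                refine Finset.sum_congr rfl fun t _ => ?_
                rw [if_congr (hcond t) rfl rfl, boole_mul]
            _ = G (ι i) (x (s i)) * star (G (ι i) (y (s i))) := by
                rw [Finset.sum_ite_eq']
                simp
            _ = φ i (x (s i)) * star (φ i (y (s i))) := by rw [hGφ, hGφ]
        have hTC : ∀ j ∈ Tᶜ, (∑ t, (if ∀ i : Fin k, s i = j → t = ι i then (1:ℂ) else 0) *
            (G t (x j) * star (G t (y j)))) = if x j = y j then (1:ℂ) else 0 := by
          intro j hj
          have hj' : ∀ i : Fin k, s i ≠ j := by
            simp only [hT, Finset.mem_compl, Finset.mem_image, Finset.mem_univ, true_and,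
              not_exists] at hj
            exact hj
          have hone : ∀ t : Fin N,
              (if ∀ i : Fin k, s i = j → t = ι i then (1:ℂ) else 0) = 1 := by
            intro t
            exact if_pos fun i hi => absurd hi (hj' i)
          calc (∑ t, (if ∀ i : Fin k, s i = j → t = ι i then (1:ℂ) else 0) *
                (G t (x j) * star (G t (y j))))
              = ∑ t, G t (x j) * star (G t (y j)) := by
                refine Finset.sum_congr rfl fun t _ => ?_
                rw [hone, one_mul]
            _ = if x j = y j then (1:ℂ) else 0 := hcol (x j) (y j)
        have hmemiff : ∀ j : Fin η, j ∈ Tᶜ ↔ ∀ i : Fin k, s i ≠ j := by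
          intro j
          simp only [hT, Finset.mem_compl, Finset.mem_image, Finset.mem_univ, true_and,
            not_exists]
        have hTCprod : (∏ j ∈ Tᶜ, ∑ t,
              (if ∀ i : Fin k, s i = j → t = ι i then (1:ℂ) else 0) *
              (G t (x j) * star (G t (y j))))
            = if ∀ j : Fin η, (∀ i : Fin k, s i ≠ j) → x j = y j then (1:ℂ) else 0 := by
          rw [Finset.prod_congr rfl hTC]
          by_cases h : ∀ j : Fin η, (∀ i : Fin k, s i ≠ j) → x j = y j
          · rw [if_pos h]
            exact Finset.prod_eq_one fun j hj => if_pos (h j ((hmemiff j).mp hj))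
          · rw [if_neg h]
            push_neg at h
            obtain ⟨j, hj, hxy⟩ := h
            exact Finset.prod_eq_zero ((hmemiff j).mpr hj) (if_neg hxy)
        rw [hTprod, hTCprod, mul_comm]

/-- Unfolding of the expectation value of `projSeq` as a double sum. -/
private lemma expval_projSeq (n η k : ℕ) (s : Fin k → Fin η) (φ : Fin k → Fin (2 ^ n) → ℂ)
    (ψ : (Fin η → Fin (2 ^ n)) → ℂ) :
    expval (projSeq n η k s φ) ψ
      = ∑ x, ∑ y, ((if ∀ j : Fin η, (∀ i : Fin k, s i ≠ j) → x j = y j then (1:ℂ) else 0) *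
          ∏ i, φ i (x (s i)) * star (φ i (y (s i)))) * (star (ψ x) * ψ y) := by
  unfold expval projSeq
  simp only [dotProduct, Matrix.mulVec, Matrix.of_apply, Pi.star_apply, Finset.mul_sum]
  refine Finset.sum_congr rfl fun x _ => Finset.sum_congr rfl fun y _ => ?_
  ring

set_option maxHeartbeats 1000000 in
set_option maxRecDepth 8000 in
/-- For a normalized antisymmetric state ψ on η registers and projectors onto
orthonormal states applied along injective sequences s ∈ S_k, ∑_{s ∈ S_k} ⟨ψ|A_s|ψ⟩ ≤ 1. -/
theorem stmt_2 (n η k : ℕ) (hk : k ≤ η)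
    (ψ : (Fin η → Fin (2 ^ n)) → ℂ)
    (hnorm : dotProduct (star ψ) ψ = 1)
    (hanti : ∀ i j : Fin η, i ≠ j → ∀ x : Fin η → Fin (2 ^ n),
      ψ (x ∘ Equiv.swap i j) = -ψ x)
    (φ : Fin k → Fin (2 ^ n) → ℂ)
    (horth : ∀ i j : Fin k,
      dotProduct (star (φ i)) (φ j) = if i = j then 1 else 0) :
    ∃ r : ℝ,
      (∑ s ∈ Finset.univ.filter (fun s : Fin k → Fin η => Function.Injective s),
        expval (projSeq n η k s φ) ψ) = (r : ℂ) ∧ r ≤ 1 := by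
  classical
  -- view `φ` as an orthonormal family in Euclidean space
  let φ' : Fin k → EuclideanSpace ℂ (Fin (2 ^ n)) := fun i => WithLp.toLp 2 (φ i)
  have hinner : ∀ i j : Fin k, (inner ℂ (φ' i) (φ' j) : ℂ) = if i = j then 1 else 0 := by
    intro i j
    have h := horth i j
    simp only [dotProduct, Pi.star_apply] at h
    rw [PiLp.inner_apply]
    simp only [RCLike.inner_apply, starRingEnd_apply]
    rw [← h]
    exact Finset.sum_congr rfl fun x _ => mul_comm _ _
  have horthφ : Orthonormal ℂ φ' := orthonormal_iff_ite.mpr hinner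
  have hkN : k ≤ 2 ^ n := by
    have h := horthφ.linearIndependent.fintype_card_le_finrank
    simpa using h
  -- extend to an orthonormal basis
  let v : Fin (2 ^ n) → EuclideanSpace ℂ (Fin (2 ^ n)) := fun t =>
    if h : (t : ℕ) < k then φ' ⟨t, h⟩ else 0
  have hres : Orthonormal ℂ (Set.restrict {t : Fin (2 ^ n) | (t : ℕ) < k} v) := by
    rw [orthonormal_iff_ite]
    rintro ⟨t, ht⟩ ⟨t', ht'⟩
    have h1 : (t : ℕ) < k := ht
    have h2 : (t' : ℕ) < k := ht'
    have e1 : v t = φ' ⟨t, h1⟩ := dif_pos h1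
    have e2 : v t' = φ' ⟨t', h2⟩ := dif_pos h2
    show (inner ℂ (v t) (v t') : ℂ) = _
    rw [e1, e2, hinner]
    refine if_congr ?_ rfl rfl
    rw [Fin.ext_iff, Subtype.ext_iff, Fin.ext_iff]
  obtain ⟨b, hb⟩ := hres.exists_orthonormalBasis_extension_of_card_eq (by simp)
  let ι : Fin k → Fin (2 ^ n) := fun i => Fin.castLE hkN i
  let G : Fin (2 ^ n) → Fin (2 ^ n) → ℂ := fun t u => b t u
  have hGφ : ∀ (i : Fin k) (u : Fin (2 ^ n)), G (ι i) u = φ i u := by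
    intro i u
    have hmem : ι i ∈ {t : Fin (2 ^ n) | (t : ℕ) < k} := by
      show ((ι i : Fin (2 ^ n)) : ℕ) < k
      exact i.isLt
    have h1 : b (ι i) = v (ι i) := hb _ hmem
    have hlt : ((ι i : Fin (2 ^ n)) : ℕ) < k := i.isLt
    have h2 : v (ι i) = φ' ⟨(ι i : ℕ), hlt⟩ := dif_pos hlt
    have h3 : (⟨((ι i : Fin (2 ^ n)) : ℕ), hlt⟩ : Fin k) = i := Fin.ext rfl
    show (b (ι i)) u = φ i u
    rw [h1, h2, h3]
  -- rows of G are orthonormal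
  have hrow : ∀ t t' : Fin (2 ^ n), ∑ u, star (G t u) * G t' u = if t = t' then 1 else 0 := by
    intro t t'
    have h := orthonormal_iff_ite.mp b.orthonormal t t'
    rw [PiLp.inner_apply] at h
    simp only [RCLike.inner_apply, starRingEnd_apply] at h
    rw [← h]
    exact Finset.sum_congr rfl fun u _ => mul_comm _ _
  -- columns of G are orthonormal (completeness)
  let M : Matrix (Fin (2 ^ n)) (Fin (2 ^ n)) ℂ := Matrix.of G
  have hBB : M * M.conjTranspose = 1 := by
    ext t t'
    simp only [Matrix.mul_apply, Matrix.conjTranspose_apply, Matrix.one_apply, Matrix.of_apply, M]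
    calc ∑ u, G t u * star (G t' u) = ∑ u, star (G t' u) * G t u :=
          Finset.sum_congr rfl fun u _ => mul_comm _ _
      _ = if t' = t then 1 else 0 := hrow t' t
      _ = if t = t' then 1 else 0 := if_congr eq_comm rfl rfl
  have hcomp : M.conjTranspose * M = 1 := mul_eq_one_comm.mp hBB
  have hcol0 : ∀ u u' : Fin (2 ^ n), ∑ t, star (G t u) * G t u' = if u = u' then 1 else 0 := by
    intro u u'
    have h : (M.conjTranspose * M) u u' = (1 : Matrix (Fin (2 ^ n)) (Fin (2 ^ n)) ℂ) u u' := by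
      rw [hcomp]
    simpa [Matrix.mul_apply, Matrix.conjTranspose_apply, Matrix.one_apply, M] using h
  have hcol : ∀ u u' : Fin (2 ^ n), ∑ t, G t u * star (G t u') = if u = u' then 1 else 0 := by
    intro u u'
    calc ∑ t, G t u * star (G t u') = ∑ t, star (G t u') * G t u :=
          Finset.sum_congr rfl fun t _ => mul_comm _ _
      _ = if u' = u then 1 else 0 := hcol0 u' u
      _ = if u = u' then 1 else 0 := if_congr eq_comm rfl rfl
  -- normalization as an explicit sum
  have hnorm' : ∑ x, star (ψ x) * ψ x = 1 := by
    simpa [dotProduct, Pi.star_apply] using hnorm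
  set f : (Fin η → Fin (2 ^ n)) → ℝ :=
    fun a => ‖∑ x, (∏ j, star (G (a j) (x j))) * ψ x‖ ^ 2 with hf
  set S := Finset.univ.filter (fun s : Fin k → Fin η => Function.Injective s) with hS
  have hpar : ∑ a : Fin η → Fin (2 ^ n), f a = 1 := by
    have h := key_parseval G ψ hcol
    rw [hnorm'] at h
    have h2 : ((∑ a : Fin η → Fin (2 ^ n), f a : ℝ) : ℂ) = 1 := by
      rw [Complex.ofReal_sum, ← h]
      refine Finset.sum_congr rfl fun a _ => ?_
      simp only [hf]
      exact (star_mul_self_c _).symm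
    exact_mod_cast h2
  refine ⟨∑ s ∈ S, ∑ a : Fin η → Fin (2 ^ n),
    if ∀ i, a (s i) = ι i then f a else 0, ?_, ?_⟩
  · -- equality
    rw [Complex.ofReal_sum]
    refine Finset.sum_congr rfl fun s hs => ?_
    have hsinj : Function.Injective s := by
      rw [hS] at hs
      exact (Finset.mem_filter.mp hs).2
    rw [expval_projSeq, ← key_expand G φ ι hcol hGφ ψ s hsinj, Complex.ofReal_sum]
    refine Finset.sum_congr rfl fun a _ => ?_
    rw [star_mul_self_c]
    simp only [hf]
    split_ifs with h
    · simp
    · simp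
  · -- the bound
    calc (∑ s ∈ S, ∑ a : Fin η → Fin (2 ^ n), if ∀ i, a (s i) = ι i then f a else 0)
        = ∑ a : Fin η → Fin (2 ^ n), ∑ s ∈ S, if ∀ i, a (s i) = ι i then f a else 0 :=
          Finset.sum_comm
      _ ≤ ∑ a : Fin η → Fin (2 ^ n), f a := by
          refine Finset.sum_le_sum fun a _ => ?_
          by_cases hinj : Function.Injective a
          · have hcard : (S.filter fun s => ∀ i, a (s i) = ι i).card ≤ 1 := by
              refine Finset.card_le_one.mpr fun s1 h1 s2 h2 => ?_
              have hp1 := (Finset.mem_filter.mp h1).2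
              have hp2 := (Finset.mem_filter.mp h2).2
              funext i
              exact hinj ((hp1 i).trans (hp2 i).symm)
            have hfnn : 0 ≤ f a := by simp only [hf]; positivity
            calc (∑ s ∈ S, if ∀ i, a (s i) = ι i then f a else 0)
                = ∑ s ∈ S.filter fun s => ∀ i, a (s i) = ι i, f a :=
                  (Finset.sum_filter _ _).symm
              _ = (S.filter fun s => ∀ i, a (s i) = ι i).card • f a := Finset.sum_const _
              _ = ((S.filter fun s => ∀ i, a (s i) = ι i).card : ℝ) * f a := nsmul_eq_mul _ _
              _ ≤ 1 * f a := by
                  refine mul_le_mul_of_nonneg_right ?_ hfnn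
                  exact_mod_cast hcard
              _ = f a := one_mul _
          · have h0 : f a = 0 := by
              simp only [hf]
              rw [c_zero G ψ hanti a hinj]
              simp
            simp [h0]
      _ = 1 := hpar
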